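/- arXiv:0906.4401 — 9 statements merged into one kernel-verified Lean document; each statement's English description precedes it below -/
import Mathlib

section
/- In any groupoid (magma) satisfying (M2) (xy)(zt)=(ty)(zx) and x(xy)=y, the identity (xy)x = (zy)z holds. -/
theorem stmt_1 {M : Type*} (f : M → M → M)
    (hM2 : ∀ x y z t, f (f x y) (f z t) = f (f t y) (f z x))
    (hcancel : ∀ x y, f x (f x y) = y) :
    ∀ x y z, f (f x y) x = f (f z y) z := by
  have key : ∀ x y, f (f x y) x = f (f y y) y := by
    intro x y
    have h9 := hM2 x y (f x y) y
    rw [hcancel] at h9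
    have h2 := congrArg (f (f y y)) h9
    rw [hcancel] at h2
    exact h2.symm
  intro x y z
  rw [key x y, key z y]
end

section
/- In any groupoid satisfying (M2) (xy)(zt)=(ty)(zx) and x(xy)=y, the medial law (M1) (xy)(zt)=(xz)(yt) holds. -/
theorem stmt_2 {M : Type*} (f : M → M → M)
    (hM2 : ∀ x y z t, f (f x y) (f z t) = f (f t y) (f z x))
    (hcancel : ∀ x y, f x (f x y) = y) :
    ∀ x y z t, f (f x y) (f z t) = f (f x z) (f y t) := by
  -- (A): (t(xy))(zx) = y(zt)
  have hA : ∀ x y z t, f (f t (f x y)) (f z x) = f y (f z t) := by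
    intro x y z t
    rw [← hM2, hcancel]
  -- (B): (t(xy))(y(zt)) = zx
  have hB : ∀ x y z t, f (f t (f x y)) (f y (f z t)) = f z x := by
    intro x y z t
    rw [← hA x y z t, hcancel]
  -- (F): (t(xz))t = zx
  have hF : ∀ t x z, f (f t (f x z)) t = f z x := by
    intro t x z
    have h := hB x z z t
    rwa [hcancel] at h
  intro x y z t
  have h1 := hF x (f z t) (f x y)
  have h2 := hF x (f y t) (f x z)
  have h3 : f (f z t) (f x y) = f (f y t) (f x z) := hM2 z t x y
  rw [← h1, h3, h2]
end

section
/- In any groupoid satisfying (M2) (xy)(zt)=(ty)(zx) and x(xy)=y, the identity x²y² = y²x² holds, where x² denotes x*x. -/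
theorem stmt_3 {M : Type*} (f : M → M → M)
    (hM2 : ∀ x y z t, f (f x y) (f z t) = f (f t y) (f z x))
    (hcancel : ∀ x y, f x (f x y) = y) :
    ∀ x y, f (f x x) (f y y) = f (f y y) (f x x) := by
  intro x y
  calc f (f x x) (f y y)
      = f (f x (f y (f y x))) (f y y) := by rw [hcancel]
    _ = f (f x (f (f y (f y y)) (f y x))) (f y y) := by rw [hcancel y y]
    _ = f (f x (f (f x (f y y)) (f y y))) (f y y) := by
        rw [hM2 y (f y y) y x]
    _ = f (f x (f (f x (f y y)) (f y y))) (f x (f x (f y y))) := by rw [hcancel]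
    _ = f (f (f x (f y y)) (f (f x (f y y)) (f y y))) (f x x) := by
        rw [hM2 x (f (f x (f y y)) (f y y)) x (f x (f y y))]
    _ = f (f y y) (f x x) := by rw [hcancel]
end

section
/- In any groupoid satisfying (M2) (xy)(zt)=(ty)(zx) and x(xy)=y, the identities (M5) x((yz)t)=z((yx)t) and (M6) x(y(zt))=z(y(xt)) hold. -/
theorem stmt_4 {M : Type*} (f : M → M → M)
    (hM2 : ∀ x y z t, f (f x y) (f z t) = f (f t y) (f z x))
    (hcancel : ∀ x y, f x (f x y) = y) :
    (∀ x y z t, f x (f (f y z) t) = f z (f (f y x) t)) ∧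
    (∀ x y z t, f x (f y (f z t)) = f z (f y (f x t))) := by
  have eq2 : ∀ v0 v1 v101 : M, (f (f v101 v1) (f (f v0 v1) v0)) = v101 := fun v0 v1 v101 => (Eq.trans (hM2 v0 v1 (f v0 v1) v101).symm (hcancel (f v0 v1) v101))
  have eq4 : ∀ v100 v101 : M, (f (f v101 (f v100 v101)) (f v101 v100)) = v101 := fun v100 v101 => (Eq.trans (congrArg (fun w => (f (f v101 (f v100 v101)) (f w v100))) (hcancel v100 v101).symm) (eq2 v100 (f v100 v101) v101))
  have eq5 : ∀ v100 v101 v201 : M, (f (f v201 v101) v201) = (f (f v100 v101) v100) := fun v100 v101 v201 => (Eq.trans (congrArg (fun w => (f (f v201 v101) w)) (eq2 v100 v101 v201).symm) (hcancel (f v201 v101) (f (f v100 v101) v100)))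
  have eq7 : ∀ v200 v201 : M, (f (f v201 (f v200 v201)) v201) = (f v201 v200) := fun v200 v201 => (Eq.trans (congrArg (fun w => (f (f v201 (f v200 v201)) w)) (eq4 v200 v201).symm) (hcancel (f v201 (f v200 v201)) (f v201 v200)))
  have eq10 : ∀ v101 v300 v301 : M, (f (f v101 (f v300 v301)) (f v301 v300)) = v101 := fun v101 v300 v301 => (Eq.trans (congrArg (fun w => (f (f v101 (f v300 v301)) w)) (eq7 v300 v301).symm) (eq2 v301 (f v300 v301) v101))
  have eq11 : ∀ v100 v300 v301 : M, (f (f v100 (f v300 v301)) v100) = (f v301 v300) := fun v100 v300 v301 => (Eq.trans (eq5 v100 (f v300 v301) v301).symm (eq7 v300 v301))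
  have eq12 : ∀ v2 v3 v100 v101 : M, (f (f v3 (f v100 v101)) (f v2 v100)) = (f v101 (f v2 v3)) := fun v2 v3 v100 v101 => (Eq.trans (hM2 v100 (f v100 v101) v2 v3).symm (congrArg (fun w => (f w (f v2 v3))) (hcancel v100 v101)))
  have eq44 : ∀ v0 v200 v400 v401 : M, (f (f v401 v400) (f (f v0 v200) v0)) = (f v200 (f v400 v401)) := fun v0 v200 v400 v401 => (Eq.trans (congrArg (fun w => (f w (f (f v0 v200) v0))) (eq11 v200 v400 v401).symm) (eq2 v0 v200 (f v200 (f v400 v401))))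
  have eq57 : ∀ v2 v201 v400 v401 : M, (f v400 (f v2 (f v201 (f v400 v401)))) = (f v201 (f v2 v401)) := fun v2 v201 v400 v401 => (Eq.trans (eq12 v2 (f v201 (f v400 v401)) v401 v400).symm (congrArg (fun w => (f w (f v2 v401))) (eq10 v201 v400 v401)))
  have eq130 : ∀ v100 v101 v300 v501 : M, (f v300 (f (f v100 v101) v501)) = (f v101 (f (f v100 v300) v501)) := fun v100 v101 v300 v501 => (Eq.trans (eq44 v100 v300 (f v100 v101) v501).symm (eq12 (f v100 v300) v501 v100 v101))
  have eq144 : ∀ v2 v100 v101 v201 : M, (f v100 (f v2 (f v201 v101))) = (f v201 (f v2 (f v100 v101))) := fun v2 v100 v101 v201 => (Eq.trans (congrArg (fun w => (f v100 (f v2 (f v201 w)))) (hcancel v100 v101).symm) (eq57 v2 v201 v100 (f v100 v101)))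
  refine ⟨fun x y z t => ?_, fun x y z t => ?_⟩
  · exact (eq130 y z x t)
  · exact (eq144 y x t z)
end

section
/- In any groupoid satisfying (M1) (xy)(zt)=(xz)(yt), (M2) (xy)(zt)=(ty)(zx), and (xy²)y² = x, the dual identity y²(y²x) = x also holds. -/
theorem stmt_6 {M : Type*} (f : M → M → M)
    (hM1 : ∀ x y z t, f (f x y) (f z t) = f (f x z) (f y t))
    (hM2 : ∀ x y z t, f (f x y) (f z t) = f (f t y) (f z x))
    (hsq : ∀ x y, f (f x (f y y)) (f y y) = x) :
    ∀ x y, f (f y y) (f (f y y) x) = x := by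
  have key : ∀ x z y, f (f y y) (f z x) = f (f x z) (f y y) := by
    intro x z y
    rw [← hM2 x y z y, hM1]
  intro x y
  rw [key x (f y y) y, hsq]
end

section
/- Every full binary tree T with leaves colored in the Klein 4-group {1,α,β,γ} by the rule that the root has color 1, a left child has α times its parent's color, and a right child has β times its parent's color, satisfies: the number of internal α-vertices plus leaf α-vertices equals φ₁(T), similarly β-vertices equal φ₁(T), γ-vertices equal φ₂(T), and 1-vertices equal φ₂(T)+1, where if a, b, c, d count the α-, β-, γ-, 1-colored leaves, m = a+b, n = c+d, then φ₁(T) = (2m+n-1)/3 and φ₂(T) = (m+2n-2)/3. -/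
/-- Full binary trees: every non-leaf has exactly two children. -/
inductive FBT : Type
  | leaf : FBT
  | node : FBT → FBT → FBT

/-- The Klein 4-group, realized as `ZMod 2 × ZMod 2` (written additively);
`(1,0)` plays the role of α, `(0,1)` of β, `(1,1)` of γ, `(0,0)` of the identity. -/
abbrev K4 := ZMod 2 × ZMod 2

def αc : K4 := (1, 0)
def βc : K4 := (0, 1)

/-- Number of leaves of color `c` in a tree whose root has color `cur`. -/
def leafCnt : FBT → K4 → K4 → ℕ
  | .leaf, cur, c => if cur = c then 1 else 0
  | .node l r, cur, c => leafCnt l (αc + cur) c + leafCnt r (βc + cur) c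

/-- Number of vertices (internal or leaves) of color `c` in a tree whose root has color `cur`. -/
def vertexCnt : FBT → K4 → K4 → ℕ
  | .leaf, cur, c => if cur = c then 1 else 0
  | .node l r, cur, c =>
      (if cur = c then 1 else 0) + vertexCnt l (αc + cur) c + vertexCnt r (βc + cur) c

lemma k4_iff (a b a' b' : K4) (h : b + a = b' + a') : (a = b) ↔ (a' = b') := by
  revert h; revert a b a' b'; decide

lemma leaf_shift (T : FBT) : ∀ cur c cur' c' : K4, c + cur = c' + cur' →
    leafCnt T cur c = leafCnt T cur' c' := by
  induction T with
  | leaf =>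
      intro cur c cur' c' h
      simp only [leafCnt, k4_iff cur c cur' c' h]
  | node l r ihl ihr =>
      intro cur c cur' c' h
      simp only [leafCnt]
      rw [ihl (αc + cur) c (αc + cur') c' (by rw [← add_assoc, ← add_assoc, add_comm c, add_comm c', add_assoc, add_assoc, h]),
          ihr (βc + cur) c (βc + cur') c' (by rw [← add_assoc, ← add_assoc, add_comm c, add_comm c', add_assoc, add_assoc, h])]

lemma vertex_shift (T : FBT) : ∀ cur c cur' c' : K4, c + cur = c' + cur' →
    vertexCnt T cur c = vertexCnt T cur' c' := by
  induction T with
  | leaf =>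
      intro cur c cur' c' h
      simp only [vertexCnt, k4_iff cur c cur' c' h]
  | node l r ihl ihr =>
      intro cur c cur' c' h
      simp only [vertexCnt, k4_iff cur c cur' c' h]
      rw [ihl (αc + cur) c (αc + cur') c' (by rw [← add_assoc, ← add_assoc, add_comm c, add_comm c', add_assoc, add_assoc, h]),
          ihr (βc + cur) c (βc + cur') c' (by rw [← add_assoc, ← add_assoc, add_comm c, add_comm c', add_assoc, add_assoc, h])]

lemma leaf_l (T : FBT) (c : K4) : leafCnt T (αc + 0) c = leafCnt T 0 (c + αc) := by
  rw [leaf_shift T (αc + 0) c 0 (c + αc) (by abel)]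
lemma leaf_r (T : FBT) (c : K4) : leafCnt T (βc + 0) c = leafCnt T 0 (c + βc) := by
  rw [leaf_shift T (βc + 0) c 0 (c + βc) (by abel)]
lemma vertex_l (T : FBT) (c : K4) : vertexCnt T (αc + 0) c = vertexCnt T 0 (c + αc) := by
  rw [vertex_shift T (αc + 0) c 0 (c + αc) (by abel)]
lemma vertex_r (T : FBT) (c : K4) : vertexCnt T (βc + 0) c = vertexCnt T 0 (c + βc) := by
  rw [vertex_shift T (βc + 0) c 0 (c + βc) (by abel)]

lemma n1 : αc + αc = (0 : K4) := by decide
lemma n2 : βc + αc = αc + βc := by decide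
lemma n3 : (αc + βc) + αc = βc := by decide
lemma n4 : (0 : K4) + αc = αc := by decide
lemma n5 : βc + βc = (0 : K4) := by decide
lemma n6 : αc + βc + βc = αc := by decide
lemma n7 : (0 : K4) + βc = βc := by decide
lemma c1 : ((0 : K4) = αc) = False := by decide
lemma c2 : ((0 : K4) = βc) = False := by decide
lemma c3 : ((0 : K4) = αc + βc) = False := by decide

theorem stmt_10 (T : FBT) :
    (3 : ℤ) * vertexCnt T 0 αc =
        2 * ((leafCnt T 0 αc : ℤ) + leafCnt T 0 βc) + ((leafCnt T 0 (αc + βc) : ℤ) + leafCnt T 0 0) - 1 ∧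
    (3 : ℤ) * vertexCnt T 0 βc =
        2 * ((leafCnt T 0 αc : ℤ) + leafCnt T 0 βc) + ((leafCnt T 0 (αc + βc) : ℤ) + leafCnt T 0 0) - 1 ∧
    (3 : ℤ) * vertexCnt T 0 (αc + βc) =
        ((leafCnt T 0 αc : ℤ) + leafCnt T 0 βc) + 2 * ((leafCnt T 0 (αc + βc) : ℤ) + leafCnt T 0 0) - 2 ∧
    (3 : ℤ) * vertexCnt T 0 0 =
        ((leafCnt T 0 αc : ℤ) + leafCnt T 0 βc) + 2 * ((leafCnt T 0 (αc + βc) : ℤ) + leafCnt T 0 0) - 2 + 3 := by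
  induction T with
  | leaf =>
      simp [leafCnt, vertexCnt, c1, c2, c3]
  | node l r ihl ihr =>
      obtain ⟨hl1, hl2, hl3, hl4⟩ := ihl
      obtain ⟨hr1, hr2, hr3, hr4⟩ := ihr
      simp only [leafCnt, vertexCnt, leaf_l, leaf_r, vertex_l, vertex_r,
        n1, n2, n3, n4, n5, n6, n7, c1, c2, c3, if_true, if_false, eq_self_iff_true] at *
      push_cast at *
      omega
end

section
/- A 4-tuple (a,b,c,d) of nonnegative integers different from (0,0,0,1) is the leaf-color count (α-leaves, β-leaves, γ-leaves, 1-leaves) of some full binary tree if and only if 2a+2b+c+d ≡ 1 (mod 3), a ≤ (2(a+b)+(c+d)-1)/3, b ≤ (2(a+b)+(c+d)-1)/3, c ≤ ((a+b)+2(c+d)-2)/3, and d ≤ ((a+b)+2(c+d)-2)/3. -/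
lemma leafCnt_shift (T : FBT) : ∀ cur y : K4, leafCnt T cur y = leafCnt T 0 (y + cur) := by
  induction T with
  | leaf => decide
  | node l r ihl ihr =>
    intro cur y
    show leafCnt l (αc + cur) y + leafCnt r (βc + cur) y =
      leafCnt l (αc + 0) (y + cur) + leafCnt r (βc + 0) (y + cur)
    rw [ihl, ihr, ihl (αc + 0), ihr (βc + 0)]
    congr 1 <;> congr 1 <;> abel

lemma node_cnt (l r : FBT) (y : K4) :
    leafCnt (.node l r) 0 y = leafCnt l 0 (y + αc) + leafCnt r 0 (y + βc) := by
  show leafCnt l (αc + 0) y + leafCnt r (βc + 0) y = _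
  rw [leafCnt_shift l, leafCnt_shift r]
  congr 1 <;> congr 1 <;> abel

lemma grow (T : FBT) (x : K4) : ∀ cur : K4, 1 ≤ leafCnt T cur x →
    ∃ T' : FBT, ∀ y : K4, leafCnt T' cur y + (if y = x then 1 else 0)
      = leafCnt T cur y + (if y = αc + x then 1 else 0) + (if y = βc + x then 1 else 0) := by
  induction T with
  | leaf =>
    intro cur hx
    have hcx : cur = x := by
      by_contra hne
      simp only [leafCnt, if_neg hne] at hx
      omega
    subst hcx
    refine ⟨.node .leaf .leaf, ?_⟩
    clear hx
    revert cur
    decide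
  | node l r ihl ihr =>
    intro cur hx
    simp only [leafCnt] at hx
    rcases (by omega : 1 ≤ leafCnt l (αc + cur) x ∨ 1 ≤ leafCnt r (βc + cur) x) with h | h
    · obtain ⟨l', hl'⟩ := ihl (αc + cur) h
      refine ⟨.node l' r, fun y => ?_⟩
      have := hl' y
      simp only [leafCnt]
      omega
    · obtain ⟨r', hr'⟩ := ihr (βc + cur) h
      refine ⟨.node l r', fun y => ?_⟩
      have := hr' y
      simp only [leafCnt]
      omega

def Cond (a b c d : ℕ) : Prop :=
  (2 * (a : ℤ) + 2 * b + c + d) % 3 = 1 ∧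
    3 * (a : ℤ) ≤ 2 * ((a : ℤ) + b) + ((c : ℤ) + d) - 1 ∧
    3 * (b : ℤ) ≤ 2 * ((a : ℤ) + b) + ((c : ℤ) + d) - 1 ∧
    3 * (c : ℤ) ≤ ((a : ℤ) + b) + 2 * ((c : ℤ) + d) - 2 ∧
    3 * (d : ℤ) ≤ ((a : ℤ) + b) + 2 * ((c : ℤ) + d) - 2

lemma fwd (T : FBT) :
    (leafCnt T 0 αc = 0 ∧ leafCnt T 0 βc = 0 ∧ leafCnt T 0 (αc + βc) = 0 ∧ leafCnt T 0 0 = 1) ∨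
    Cond (leafCnt T 0 αc) (leafCnt T 0 βc) (leafCnt T 0 (αc + βc)) (leafCnt T 0 0) := by
  induction T with
  | leaf => left; refine ⟨by decide, by decide, by decide, by decide⟩
  | node l r ihl ihr =>
    right
    have ea := node_cnt l r αc
    have eb := node_cnt l r βc
    have ec := node_cnt l r (αc + βc)
    have ed := node_cnt l r 0
    rw [show αc + αc = (0:K4) by decide, show αc + βc = αc + βc from rfl] at ea
    rw [show βc + αc = αc + βc by decide, show βc + βc = (0:K4) by decide] at eb
    rw [show αc + βc + αc = βc by decide, show αc + βc + βc = αc by decide] at ec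
    rw [show (0:K4) + αc = αc by decide, show (0:K4) + βc = βc by decide] at ed
    unfold Cond at *
    refine ⟨?_, ?_, ?_, ?_, ?_⟩ <;>
      rw [ea, eb, ec, ed] <;> push_cast <;>
      rcases ihl with ⟨q1, q2, q3, q4⟩ | ⟨q1, q2, q3, q4, q5⟩ <;>
      rcases ihr with ⟨w1, w2, w3, w4⟩ | ⟨w1, w2, w3, w4, w5⟩ <;>
      omega

section growers

lemma growAt (T : FBT) (x : K4) (h : 1 ≤ leafCnt T 0 x) :
    ∃ T' : FBT,
      leafCnt T' 0 αc + (if αc = x then 1 else 0)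
        = leafCnt T 0 αc + (if αc = αc + x then 1 else 0) + (if αc = βc + x then 1 else 0) ∧
      leafCnt T' 0 βc + (if βc = x then 1 else 0)
        = leafCnt T 0 βc + (if βc = αc + x then 1 else 0) + (if βc = βc + x then 1 else 0) ∧
      leafCnt T' 0 (αc + βc) + (if αc + βc = x then 1 else 0)
        = leafCnt T 0 (αc + βc) + (if αc + βc = αc + x then 1 else 0)
          + (if αc + βc = βc + x then 1 else 0) ∧
      leafCnt T' 0 0 + (if (0:K4) = x then 1 else 0)
        = leafCnt T 0 0 + (if (0:K4) = αc + x then 1 else 0)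
          + (if (0:K4) = βc + x then 1 else 0) := by
  obtain ⟨T', hT'⟩ := grow T x 0 h
  exact ⟨T', hT' αc, hT' βc, hT' (αc + βc), hT' 0⟩

lemma grow_one (T : FBT) (h : 1 ≤ leafCnt T 0 0) :
    ∃ T' : FBT, leafCnt T' 0 αc = leafCnt T 0 αc + 1 ∧
      leafCnt T' 0 βc = leafCnt T 0 βc + 1 ∧
      leafCnt T' 0 (αc + βc) = leafCnt T 0 (αc + βc) ∧
      leafCnt T' 0 0 + 1 = leafCnt T 0 0 := by
  obtain ⟨T', h1, h2, h3, h4⟩ := growAt T 0 h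
  norm_num [show αc + (0:K4) = αc by decide, show βc + (0:K4) = βc by decide,
    show (αc:K4) ≠ 0 by decide, show (βc:K4) ≠ 0 by decide, show αc ≠ βc by decide,
    show βc ≠ αc by decide, show αc + βc ≠ αc by decide, show αc + βc ≠ βc by decide,
    show αc + βc ≠ (0:K4) by decide, show (0:K4) ≠ αc by decide,
    show (0:K4) ≠ βc by decide] at h1 h2 h3 h4
  exact ⟨T', h1, h2, h3, h4⟩

lemma grow_alpha (T : FBT) (h : 1 ≤ leafCnt T 0 αc) :
    ∃ T' : FBT, leafCnt T' 0 αc + 1 = leafCnt T 0 αc ∧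
      leafCnt T' 0 βc = leafCnt T 0 βc ∧
      leafCnt T' 0 (αc + βc) = leafCnt T 0 (αc + βc) + 1 ∧
      leafCnt T' 0 0 = leafCnt T 0 0 + 1 := by
  obtain ⟨T', h1, h2, h3, h4⟩ := growAt T αc h
  norm_num [show αc + αc = (0:K4) by decide, show βc + αc = αc + βc by decide,
    show (αc:K4) ≠ 0 by decide, show (βc:K4) ≠ 0 by decide, show αc ≠ βc by decide,
    show βc ≠ αc by decide, show αc + βc ≠ αc by decide, show αc + βc ≠ βc by decide,
    show αc + βc ≠ (0:K4) by decide, show (0:K4) ≠ αc by decide, show βc ≠ αc + βc by decide,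
    show (0:K4) ≠ βc by decide] at h1 h2 h3 h4
  exact ⟨T', h1, h2, h3, h4⟩

lemma grow_beta (T : FBT) (h : 1 ≤ leafCnt T 0 βc) :
    ∃ T' : FBT, leafCnt T' 0 αc = leafCnt T 0 αc ∧
      leafCnt T' 0 βc + 1 = leafCnt T 0 βc ∧
      leafCnt T' 0 (αc + βc) = leafCnt T 0 (αc + βc) + 1 ∧
      leafCnt T' 0 0 = leafCnt T 0 0 + 1 := by
  obtain ⟨T', h1, h2, h3, h4⟩ := growAt T βc h
  norm_num [show αc + βc = αc + βc from rfl, show βc + βc = (0:K4) by decide,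
    show (αc:K4) ≠ 0 by decide, show (βc:K4) ≠ 0 by decide, show αc ≠ βc by decide,
    show βc ≠ αc by decide, show αc + βc ≠ αc by decide, show αc + βc ≠ βc by decide,
    show αc + βc ≠ (0:K4) by decide, show (0:K4) ≠ αc by decide, show αc ≠ αc + βc by decide,
    show (0:K4) ≠ βc by decide] at h1 h2 h3 h4
  exact ⟨T', h1, h2, h3, h4⟩

lemma grow_gamma (T : FBT) (h : 1 ≤ leafCnt T 0 (αc + βc)) :
    ∃ T' : FBT, leafCnt T' 0 αc = leafCnt T 0 αc + 1 ∧
      leafCnt T' 0 βc = leafCnt T 0 βc + 1 ∧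
      leafCnt T' 0 (αc + βc) + 1 = leafCnt T 0 (αc + βc) ∧
      leafCnt T' 0 0 = leafCnt T 0 0 := by
  obtain ⟨T', h1, h2, h3, h4⟩ := growAt T (αc + βc) h
  norm_num [show αc + (αc + βc) = βc by decide, show βc + (αc + βc) = αc by decide,
    show (αc:K4) ≠ 0 by decide, show (βc:K4) ≠ 0 by decide, show αc ≠ βc by decide,
    show βc ≠ αc by decide, show αc ≠ αc + βc by decide, show βc ≠ αc + βc by decide,
    show αc + βc ≠ (0:K4) by decide, show (0:K4) ≠ αc by decide,
    show (0:K4) ≠ βc by decide, show (0:K4) ≠ αc + βc by decide] at h1 h2 h3 h4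
  exact ⟨T', h1, h2, h3, h4⟩

end growers

lemma build : ∀ n a b c d : ℕ, a + b + c + d ≤ n →
    ¬(a = 0 ∧ b = 0 ∧ c = 0 ∧ d = 1) → Cond a b c d →
    ∃ T : FBT, leafCnt T 0 αc = a ∧ leafCnt T 0 βc = b ∧
      leafCnt T 0 (αc + βc) = c ∧ leafCnt T 0 0 = d := by
  intro n
  induction n with
  | zero =>
    intro a b c d hn hne hc
    obtain ⟨h1, h2, h3, h4, h5⟩ := hc
    exfalso; omega
  | succ n ih =>
    intro a b c d hn hne hc
    obtain ⟨h1, h2, h3, h4, h5⟩ := hc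
    by_cases h110 : a = 1 ∧ b = 1 ∧ c = 0 ∧ d = 0
    · obtain ⟨rfl, rfl, rfl, rfl⟩ := h110
      exact ⟨.node .leaf .leaf, by decide, by decide, by decide, by decide⟩
    · by_cases hab : 1 ≤ a ∧ 1 ≤ b
      · obtain ⟨a', rfl⟩ : ∃ a', a = a' + 1 := ⟨a - 1, by omega⟩
        obtain ⟨b', rfl⟩ : ∃ b', b = b' + 1 := ⟨b - 1, by omega⟩
        by_cases hd : 3 * ((d : ℤ) + 1) ≤ ((a' : ℤ) + b') + 2 * ((c : ℤ) + (d + 1)) - 2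
        · -- contract to (a', b', c, d+1), regrow a 1-leaf
          obtain ⟨T₀, e1, e2, e3, e4⟩ := ih a' b' c (d + 1) (by omega) (by omega)
            ⟨by omega, by omega, by omega, by omega, by omega⟩
          obtain ⟨T', g1, g2, g3, g4⟩ := grow_one T₀ (by omega)
          exact ⟨T', by omega, by omega, by omega, by omega⟩
        · -- contract to (a', b', c+1, d), regrow a γ-leaf
          obtain ⟨T₀, e1, e2, e3, e4⟩ := ih a' b' (c + 1) d (by omega) (by omega)
            ⟨by omega, by omega, by omega, by omega, by omega⟩
          obtain ⟨T', g1, g2, g3, g4⟩ := grow_gamma T₀ (by omega)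
          exact ⟨T', by omega, by omega, by omega, by omega⟩
      · by_cases hcd : 1 ≤ c ∧ 1 ≤ d
        · obtain ⟨c', rfl⟩ : ∃ c', c = c' + 1 := ⟨c - 1, by omega⟩
          obtain ⟨d', rfl⟩ : ∃ d', d = d' + 1 := ⟨d - 1, by omega⟩
          by_cases ha : 3 * ((a : ℤ) + 1) ≤ 2 * (((a : ℤ) + 1) + b) + ((c' : ℤ) + d') - 1
          · -- contract to (a+1, b, c', d'), regrow an α-leaf
            obtain ⟨T₀, e1, e2, e3, e4⟩ := ih (a + 1) b c' d' (by omega) (by omega)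
              ⟨by omega, by omega, by omega, by omega, by omega⟩
            obtain ⟨T', g1, g2, g3, g4⟩ := grow_alpha T₀ (by omega)
            exact ⟨T', by omega, by omega, by omega, by omega⟩
          · -- contract to (a, b+1, c', d'), regrow a β-leaf
            obtain ⟨T₀, e1, e2, e3, e4⟩ := ih a (b + 1) c' d' (by omega) (by omega)
              ⟨by omega, by omega, by omega, by omega, by omega⟩
            obtain ⟨T', g1, g2, g3, g4⟩ := grow_beta T₀ (by omega)
            exact ⟨T', by omega, by omega, by omega, by omega⟩
        · exfalso; omega

theorem stmt_12 (a b c d : ℕ) (h : (a, b, c, d) ≠ (0, 0, 0, 1)) :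
    (∃ T : FBT, leafCnt T 0 αc = a ∧ leafCnt T 0 βc = b ∧
        leafCnt T 0 (αc + βc) = c ∧ leafCnt T 0 0 = d) ↔
      ((2 * (a : ℤ) + 2 * b + c + d) % 3 = 1 ∧
        3 * (a : ℤ) ≤ 2 * ((a : ℤ) + b) + ((c : ℤ) + d) - 1 ∧
        3 * (b : ℤ) ≤ 2 * ((a : ℤ) + b) + ((c : ℤ) + d) - 1 ∧
        3 * (c : ℤ) ≤ ((a : ℤ) + b) + 2 * ((c : ℤ) + d) - 2 ∧
        3 * (d : ℤ) ≤ ((a : ℤ) + b) + 2 * ((c : ℤ) + d) - 2) := by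
  constructor
  · rintro ⟨T, rfl, rfl, rfl, rfl⟩
    rcases fwd T with ⟨q1, q2, q3, q4⟩ | hcond
    · exact absurd (by rw [q1, q2, q3, q4]) h
    · exact hcond
  · rintro ⟨h1, h2, h3, h4, h5⟩
    exact build (a + b + c + d) a b c d le_rfl
      (fun ⟨u1, u2, u3, u4⟩ => h (by subst u1 u2 u3 u4; rfl)) ⟨h1, h2, h3, h4, h5⟩
end

section
/- In any groupoid satisfying all six mutation laws (M1)–(M6) together with the identity ε: x(x(yz)) = (x(zy))x, the identity ((xy)z)(xy) = ((yx)z)(yx) holds. -/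
theorem stmt_18 {M : Type*} (f : M → M → M)
    (hM1 : ∀ x y z t, f (f x y) (f z t) = f (f x z) (f y t))
    (hM2 : ∀ x y z t, f (f x y) (f z t) = f (f t y) (f z x))
    (hM3 : ∀ x y z t, f (f (f x y) z) t = f (f (f x t) z) y)
    (hM4 : ∀ x y z t, f (f x (f y z)) t = f (f x (f t z)) y)
    (hM5 : ∀ x y z t, f x (f (f y z) t) = f z (f (f y x) t))
    (hM6 : ∀ x y z t, f x (f y (f z t)) = f z (f y (f x t)))
    (hε : ∀ x y z, f x (f x (f y z)) = f (f x (f z y)) x) :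
    ∀ x y z, f (f (f x y) z) (f x y) = f (f (f y x) z) (f y x) := by
  intro x y z
  calc f (f (f x y) z) (f x y)
      = f (f (f x y) x) (f z y) := hM1 (f x y) z x y
    _ = f (f (f x (f z y)) x) y := hM3 x y x (f z y)
    _ = f (f x (f x (f y z))) y := by rw [hε x y z]
    _ = f (f y (f x (f x z))) y := by rw [hM6 x x y z]
    _ = f y (f y (f (f x z) x)) := (hε y (f x z) x).symm
    _ = f (f x z) (f y (f y x)) := (hM6 (f x z) y y x).symm
    _ = f (f (f y x) z) (f y x) := (hM2 (f y x) z y x).symm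
end

section
/- In any groupoid satisfying all six mutation laws (M1)–(M6) together with ε: x(x(yz)) = (x(zy))x, the identity (z(yx))(xy) = (z(xy))(yx) holds. -/
theorem stmt_19 {M : Type*} (f : M → M → M)
    (hM1 : ∀ x y z t, f (f x y) (f z t) = f (f x z) (f y t))
    (hM2 : ∀ x y z t, f (f x y) (f z t) = f (f t y) (f z x))
    (hM3 : ∀ x y z t, f (f (f x y) z) t = f (f (f x t) z) y)
    (hM4 : ∀ x y z t, f (f x (f y z)) t = f (f x (f t z)) y)
    (hM5 : ∀ x y z t, f x (f (f y z) t) = f z (f (f y x) t))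
    (hM6 : ∀ x y z t, f x (f y (f z t)) = f z (f y (f x t)))
    (hε : ∀ x y z, f x (f x (f y z)) = f (f x (f z y)) x) :
    ∀ x y z, f (f z (f y x)) (f x y) = f (f z (f x y)) (f y x) := by
  intro x y z
  calc f (f z (f y x)) (f x y)
      = f (f z x) (f (f y x) y) := hM1 z (f y x) x y
    _ = f x (f (f y (f z x)) y) := hM5 (f z x) y x y
    _ = f x (f y (f y (f x z))) := by rw [← hε y x z]
    _ = f x (f x (f y (f y z))) := by rw [hM6 y y x z]
    _ = f (f x (f (f y z) y)) x := hε x y (f y z)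
    _ = f (f x (f x y)) (f y z) := hM4 x (f y z) y x
    _ = f (f z (f x y)) (f y x) := hM2 x (f x y) y z
end
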